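/- Let G be a finite connected simple graph whose vertex set is V = S ∪ T, where |T| = 3, |S ∩ T| = 1, and the subgraphs of G induced on S and on T are both connected. Let G' be a simple graph on vertex set V ∪ {x} with x ∉ V, whose induced subgraph on V equals G, such that x has at least one neighbor in G' and every neighbor of x in G' lies in T. Then there exist subsets S', T' of V ∪ {x} with |S'| = |S| + 1, |T'| = 3, S' ∪ T' = V ∪ {x}, |S' ∩ T'| = 1, and the subgraphs of G' induced on S' and on T' are both connected. -/

import Mathlib

open SimpleGraph

lemma exists_adj_of_conn {α : Type*} {H : SimpleGraph α} (h : H.Connected)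
    (u v : α) (huv : u ≠ v) : ∃ w, H.Adj u w := by
  obtain ⟨p⟩ := h.preconnected u v
  cases p with
  | nil => exact absurd rfl huv
  | cons h' _ => exact ⟨_, h'⟩

lemma map_induce_connected {V : Type} (G : SimpleGraph V) (G' : SimpleGraph (Option V))
    (hinduce : ∀ u v, G'.Adj (some u) (some v) ↔ G.Adj u v) (s : Set V)
    (h : (G.induce s).Connected) : (G'.induce (some '' s)).Connected := by
  have e : G.induce s ≃g G'.induce (some '' s) :=
    { toEquiv := Equiv.Set.image some s (Option.some_injective V),
      map_rel_iff' := by intro ⟨a,ha⟩ ⟨b,hb⟩; simp [hinduce, Equiv.Set.imageOfInjOn] }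
  exact e.connected_iff.mp h

lemma insert_connected {α : Type*} (G : SimpleGraph α) {s : Set α} {a b : α} (hb : b ∈ s)
    (hab : G.Adj a b) (h : (G.induce s).Connected) : (G.induce (insert a s)).Connected := by
  have h2 := SimpleGraph.induce_union_connected (SimpleGraph.induce_pair_connected_of_adj hab).preconnected h.preconnected
    ⟨b, by simp [hb]⟩
  have hset : ({a, b} : Set α) ∪ s = insert a s := by
    ext x
    simp only [Set.mem_union, Set.mem_insert_iff, Set.mem_singleton_iff]
    constructor
    · rintro ((rfl | rfl) | h)
      exacts [Or.inl rfl, Or.inr hb, Or.inr h]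
    · rintro (rfl | h)
      exacts [Or.inl (Or.inl rfl), Or.inr h]
  rwa [hset] at h2

lemma path3_connected {α : Type*} (G : SimpleGraph α) {a b c : α} (hab : G.Adj a b)
    (hbc : G.Adj b c) : (G.induce {a, b, c}).Connected := by
  have h2 := SimpleGraph.induce_union_connected (SimpleGraph.induce_pair_connected_of_adj hab).preconnected
    (SimpleGraph.induce_pair_connected_of_adj hbc).preconnected ⟨b, by simp⟩
  have hset : ({a, b} : Set α) ∪ {b, c} = {a, b, c} := by ext x; simp; tauto
  rwa [hset] at h2

lemma core {V : Type} [Fintype V] [DecidableEq V]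
    (G : SimpleGraph V) (G' : SimpleGraph (Option V))
    (S : Finset V) (c t m w z : V)
    (hcover : ∀ y : V, y ∈ S ∨ y = w ∨ y = t ∨ y = m)
    (hwS : w ∉ S) (hcS : c ∈ S)
    (hSconn : (G.induce (S : Set V)).Connected)
    (hinduce : ∀ u v : V, G'.Adj (some u) (some v) ↔ G.Adj u v)
    (hxt : G'.Adj none (some t))
    (htm : G.Adj t m)
    (hwc : G.Adj w c)
    (hz : z = t ∨ z = m) (hzS' : z = w ∨ z ∈ S)
    (ht_not : t ≠ z → t ≠ w ∧ t ∉ S) (hm_not : m ≠ z → m ≠ w ∧ m ∉ S) :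
    ∃ S' T' : Finset (Option V),
      S'.card = S.card + 1 ∧
      T'.card = 3 ∧
      S' ∪ T' = Finset.univ ∧
      (S' ∩ T').card = 1 ∧
      (G'.induce (S' : Set (Option V))).Connected ∧
      (G'.induce (T' : Set (Option V))).Connected := by
  have htm_ne : t ≠ m := htm.ne
  refine ⟨insert (some w) (S.map Function.Embedding.some),
    {none, some t, some m}, ?_, ?_, ?_, ?_, ?_, ?_⟩
  · rw [Finset.card_insert_of_notMem (by simp [hwS]), Finset.card_map]
  · rw [Finset.card_insert_of_notMem (by simp), Finset.card_insert_of_notMem (by simp [htm_ne]),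
      Finset.card_singleton]
  · ext o
    simp only [Finset.mem_union, Finset.mem_insert, Finset.mem_map, Finset.mem_singleton,
      Finset.mem_univ, iff_true, Function.Embedding.some_apply]
    match o with
    | none => tauto
    | some y =>
      rcases hcover y with h | h | h | h
      · exact Or.inl (Or.inr ⟨y, h, rfl⟩)
      · exact Or.inl (Or.inl (by rw [h]))
      · exact Or.inr (Or.inr (Or.inl (by rw [h])))
      · exact Or.inr (Or.inr (Or.inr (by rw [h])))
  · have : (insert (some w) (S.map Function.Embedding.some)) ∩ {none, some t, some m}
        = {some z} := by
      ext o
      simp only [Finset.mem_inter, Finset.mem_insert, Finset.mem_map, Finset.mem_singleton,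
        Function.Embedding.some_apply]
      constructor
      · rintro ⟨hS', hT'⟩
        rcases hT' with rfl | rfl | rfl
        · rcases hS' with h | ⟨y, _, h⟩ <;> exact absurd h (by simp)
        · by_cases h : t = z
          · rw [h]
          · obtain ⟨h1, h2⟩ := ht_not h
            rcases hS' with h' | ⟨y, hy, h'⟩
            · exact absurd (Option.some_injective _ h'.symm) (Ne.symm h1)
            · exact absurd ((Option.some_injective _ h') ▸ hy) h2
        · by_cases h : m = z
          · rw [h]
          · obtain ⟨h1, h2⟩ := hm_not h
            rcases hS' with h' | ⟨y, hy, h'⟩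
            · exact absurd (Option.some_injective _ h'.symm) (Ne.symm h1)
            · exact absurd ((Option.some_injective _ h') ▸ hy) h2
      · rintro rfl
        refine ⟨?_, ?_⟩
        · rcases hzS' with rfl | h
          · exact Or.inl rfl
          · exact Or.inr ⟨z, h, rfl⟩
        · rcases hz with rfl | rfl
          · exact Or.inr (Or.inl rfl)
          · exact Or.inr (Or.inr rfl)
    rw [this, Finset.card_singleton]
  · have hcoe : ((insert (some w) (S.map Function.Embedding.some) : Finset (Option V)) :
        Set (Option V)) = insert (some w) (some '' (S : Set V)) := by
      simp [Finset.coe_map]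
    rw [hcoe]
    exact insert_connected G' ⟨c, hcS, rfl⟩ ((hinduce w c).mpr hwc)
      (map_induce_connected G G' hinduce _ hSconn)
  · have hcoe : (({none, some t, some m} : Finset (Option V)) : Set (Option V))
        = {none, some t, some m} := by simp
    rw [hcoe]
    exact path3_connected G' hxt ((hinduce t m).mpr htm)

lemma aux2 {V : Type} [Fintype V] [DecidableEq V]
    (G : SimpleGraph V) (G' : SimpleGraph (Option V))
    (S T : Finset V) (c u v : V)
    (hunion : S ∪ T = Finset.univ)
    (hTe : T = {c, u, v})
    (hcS : c ∈ S) (huS : u ∉ S) (hvS : v ∉ S)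
    (huv : u ≠ v) (hcu : c ≠ u) (hcv : c ≠ v)
    (hSconn : (G.induce (S : Set V)).Connected)
    (hTconn : (G.induce (T : Set V)).Connected)
    (hinduce : ∀ u v : V, G'.Adj (some u) (some v) ↔ G.Adj u v)
    (hxu : G'.Adj none (some u)) :
    ∃ S' T' : Finset (Option V),
      S'.card = S.card + 1 ∧
      T'.card = 3 ∧
      S' ∪ T' = Finset.univ ∧
      (S' ∩ T').card = 1 ∧
      (G'.induce (S' : Set (Option V))).Connected ∧
      (G'.induce (T' : Set (Option V))).Connected := by
  have key : ∀ p ∈ T, ∀ q ∈ T, p ≠ q → ∃ r ∈ T, G.Adj p r := by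
    intro p hp q hq hpq
    obtain ⟨⟨r, hr⟩, hadj⟩ := exists_adj_of_conn hTconn ⟨p, hp⟩ ⟨q, hq⟩ (by simp [hpq])
    exact ⟨r, hr, hadj⟩
  have hcover : ∀ y : V, y ∈ S ∨ y = u ∨ y = v := by
    intro y
    have hy : y ∈ S ∪ T := hunion ▸ Finset.mem_univ y
    rcases Finset.mem_union.mp hy with h | h
    · exact Or.inl h
    · rw [hTe] at h
      simp only [Finset.mem_insert, Finset.mem_singleton] at h
      rcases h with rfl | rfl | rfl
      exacts [Or.inl hcS, Or.inr (Or.inl rfl), Or.inr (Or.inr rfl)]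
  have hcT : c ∈ T := by simp [hTe]
  have huT : u ∈ T := by simp [hTe]
  have hvT : v ∈ T := by simp [hTe]
  have triple : ∀ r ∈ T, r = c ∨ r = u ∨ r = v := by
    intro r hr; rw [hTe] at hr
    simpa using hr
  have hc_adj : G.Adj c u ∨ G.Adj c v := by
    obtain ⟨r, hr, hadj⟩ := key c hcT u huT hcu
    rcases triple r hr with rfl | rfl | rfl
    · exact absurd rfl hadj.ne
    exacts [Or.inl hadj, Or.inr hadj]
  by_cases huv_adj : G.Adj u v
  · by_cases hcu_adj : G.Adj c u
    · -- T' = {x, u, v}, S' = S ∪ {u}, shared u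
      exact core G G' S c u v u u (fun y => (hcover y).imp_right Or.inr) huS hcS hSconn hinduce
        hxu huv_adj hcu_adj.symm (Or.inl rfl) (Or.inl rfl)
        (fun h => absurd rfl h) (fun h => ⟨huv.symm, hvS⟩)
    · -- T' = {x, u, v}, S' = S ∪ {v}, shared v
      have hcv_adj : G.Adj c v := hc_adj.resolve_left hcu_adj
      refine core G G' S c u v v v ?_ hvS hcS hSconn hinduce
        hxu huv_adj hcv_adj.symm (Or.inr rfl) (Or.inl rfl)
        (fun _ => ⟨huv, huS⟩) (fun h => absurd rfl h)
      intro y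
      rcases hcover y with h | h | h
      exacts [Or.inl h, Or.inr (Or.inr (Or.inl h)), Or.inr (Or.inl h)]
  · -- no edge u-v: then c ~ u and c ~ v; T' = {x, u, c}, S' = S ∪ {v}, shared c
    have hu_adj : G.Adj u c := by
      obtain ⟨r, hr, hadj⟩ := key u huT c hcT (Ne.symm hcu)
      rcases triple r hr with rfl | rfl | rfl
      · exact hadj
      · exact absurd rfl hadj.ne
      · exact absurd hadj huv_adj
    have hv_adj : G.Adj v c := by
      obtain ⟨r, hr, hadj⟩ := key v hvT c hcT (Ne.symm hcv)
      rcases triple r hr with rfl | rfl | rfl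
      · exact hadj
      · exact absurd hadj.symm huv_adj
      · exact absurd rfl hadj.ne
    refine core G G' S c u c v c ?_ hvS hcS hSconn hinduce
      hxu hu_adj hv_adj (Or.inr rfl) (Or.inr hcS)
      (fun _ => ⟨huv, huS⟩) (fun h => absurd rfl h)
    intro y
    rcases hcover y with h | h | h
    exacts [Or.inl h, Or.inr (Or.inr (Or.inl h)), Or.inr (Or.inl h)]


/-- Inductive step of the completeness theorem for two-vertex
exploration.  `G` is a connected graph on vertex set `V = S ∪ T` with `|T| = 3`,
`|S ∩ T| = 1`, and both induced parts connected.  `G'` extends `G` by one new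
vertex (modeled as `none : Option V`) that has at least one neighbor and all of
whose neighbors lie in `T`.  Then the enlarged graph can be re-dissected into a
connected part `S'` of size `|S| + 1` and a connected size-3 part `T'` sharing
exactly one vertex and covering all vertices. -/
theorem two_vertex_exploration_inductive_step
    {V : Type} [Fintype V] [DecidableEq V]
    (G : SimpleGraph V) (G' : SimpleGraph (Option V))
    (hG : G.Connected)
    (S T : Finset V)
    (hunion : S ∪ T = Finset.univ)
    (hT : T.card = 3)
    (hST : (S ∩ T).card = 1)
    (hSconn : (G.induce (S : Set V)).Connected)
    (hTconn : (G.induce (T : Set V)).Connected)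
    (hinduce : ∀ u v : V, G'.Adj (some u) (some v) ↔ G.Adj u v)
    (hx_nbr : ∃ y, G'.Adj none y)
    (hx_in_T : ∀ u : V, G'.Adj none (some u) → u ∈ T) :
    ∃ S' T' : Finset (Option V),
      S'.card = S.card + 1 ∧
      T'.card = 3 ∧
      S' ∪ T' = Finset.univ ∧
      (S' ∩ T').card = 1 ∧
      (G'.induce (S' : Set (Option V))).Connected ∧
      (G'.induce (T' : Set (Option V))).Connected := by
  obtain ⟨c, hSTc⟩ := Finset.card_eq_one.mp hST
  have hcS : c ∈ S := (Finset.mem_inter.mp (hSTc ▸ Finset.mem_singleton_self c)).1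
  have hcT : c ∈ T := (Finset.mem_inter.mp (hSTc ▸ Finset.mem_singleton_self c)).2
  have herase : (T.erase c).card = 2 := by
    rw [Finset.card_erase_of_mem hcT, hT]
  obtain ⟨a, b, hab, he⟩ := Finset.card_eq_two.mp herase
  have haE : a ∈ T.erase c := he ▸ Finset.mem_insert_self a {b}
  have hbE : b ∈ T.erase c := he ▸ Finset.mem_insert.mpr (Or.inr (Finset.mem_singleton_self b))
  have haT : a ∈ T := Finset.mem_of_mem_erase haE
  have hbT : b ∈ T := Finset.mem_of_mem_erase hbE
  have hca : c ≠ a := fun h => (Finset.mem_erase.mp haE).1 h.symm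
  have hcb : c ≠ b := fun h => (Finset.mem_erase.mp hbE).1 h.symm
  have haS : a ∉ S := fun h => hca (Finset.mem_singleton.mp
    (hSTc ▸ Finset.mem_inter.mpr ⟨h, haT⟩)).symm
  have hbS : b ∉ S := fun h => hcb (Finset.mem_singleton.mp
    (hSTc ▸ Finset.mem_inter.mpr ⟨h, hbT⟩)).symm
  have hTe : T = {c, a, b} := by rw [← Finset.insert_erase hcT, he]
  by_cases hxc : G'.Adj none (some c)
  · -- keep T, add x to S
    refine ⟨insert none (S.map Function.Embedding.some), T.map Function.Embedding.some,
      ?_, ?_, ?_, ?_, ?_, ?_⟩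
    · rw [Finset.card_insert_of_notMem (by simp), Finset.card_map]
    · rw [Finset.card_map, hT]
    · ext o
      simp only [Finset.mem_union, Finset.mem_insert, Finset.mem_map, Finset.mem_univ, iff_true,
        Function.Embedding.some_apply]
      match o with
      | none => exact Or.inl (Or.inl rfl)
      | some y =>
        have hy : y ∈ S ∪ T := hunion ▸ Finset.mem_univ y
        rcases Finset.mem_union.mp hy with h | h
        · exact Or.inl (Or.inr ⟨y, h, rfl⟩)
        · exact Or.inr ⟨y, h, rfl⟩
    · have : (insert none (S.map Function.Embedding.some)) ∩ T.map Function.Embedding.some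
          = {some c} := by
        ext o
        simp only [Finset.mem_inter, Finset.mem_insert, Finset.mem_map, Finset.mem_singleton,
          Function.Embedding.some_apply]
        constructor
        · rintro ⟨h1, h2⟩
          obtain ⟨yy, hyT, rfl⟩ := h2
          rcases h1 with h | ⟨y', hy', h⟩
          · exact absurd h (by simp)
          · have hyy : y' = yy := Option.some_injective _ h
            subst hyy
            have hmem : y' ∈ S ∩ T := Finset.mem_inter.mpr ⟨hy', hyT⟩
            rw [hSTc, Finset.mem_singleton] at hmem
            rw [hmem]
        · rintro rfl
          exact ⟨Or.inr ⟨c, hcS, rfl⟩, c, hcT, rfl⟩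
      rw [this, Finset.card_singleton]
    · have hcoe : ((insert none (S.map Function.Embedding.some) : Finset (Option V)) :
          Set (Option V)) = insert none (some '' (S : Set V)) := by
        simp [Finset.coe_map]
      rw [hcoe]
      exact insert_connected G' ⟨c, hcS, rfl⟩ hxc (map_induce_connected G G' hinduce _ hSconn)
    · have hcoe : ((T.map Function.Embedding.some : Finset (Option V)) : Set (Option V))
          = some '' (T : Set V) := by simp [Finset.coe_map]
      rw [hcoe]
      exact map_induce_connected G G' hinduce _ hTconn
  · obtain ⟨y, hy⟩ := hx_nbr
    match y with
    | none => exact absurd hy (G'.irrefl)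
    | some u =>
      have huT : u ∈ T := hx_in_T u hy
      have huc : u ≠ c := fun h => hxc (h ▸ hy)
      have : u = a ∨ u = b := by
        rw [hTe] at huT
        simp only [Finset.mem_insert, Finset.mem_singleton] at huT
        tauto
      rcases this with rfl | rfl
      · exact aux2 G G' S T c u b hunion hTe hcS haS hbS hab hca hcb hSconn hTconn hinduce hy
      · exact aux2 G G' S T c u a hunion (by rw [hTe, Finset.pair_comm]) hcS hbS haS
          (Ne.symm hab) hcb hca hSconn hTconn hinduce hy
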